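/- arXiv:1205.6243 — 2 statements merged into one kernel-verified Lean document; each statement's English description precedes it below -/
import Mathlib

section
/- There exists a constant C > 0 such that for every smooth function f : [0,∞) × ℝ → ℝ with compact support (no boundary condition imposed on {0} × ℝ) one has ‖f‖_{L^∞([0,∞)×ℝ)}² ≤ C · ‖f‖_{L²([0,∞)×ℝ)} · ‖Df‖_{L^∞([0,∞)×ℝ)}. -/
noncomputable section

open MeasureTheory

/-- The closed right half-plane `[0,∞) × ℝ` inside `ℝ²`. -/
def halfPlane : Set (EuclideanSpace ℝ (Fin 2)) := {x | 0 ≤ x 0}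

lemma halfPlane_eq : halfPlane = (EuclideanSpace.proj (0 : Fin 2) : EuclideanSpace ℝ (Fin 2) →L[ℝ] ℝ) ⁻¹' Set.Ici 0 := by
  ext x; simp [halfPlane]

lemma isClosed_halfPlane : IsClosed halfPlane := by
  rw [halfPlane_eq]
  exact isClosed_Ici.preimage (EuclideanSpace.proj (0 : Fin 2)).continuous

lemma measurableSet_halfPlane : MeasurableSet halfPlane :=
  isClosed_halfPlane.measurableSet

lemma convex_halfPlane : Convex ℝ halfPlane := by
  intro x hx y hy a b ha hb hab
  have hxy : (a • x + b • y) 0 = a * x 0 + b * y 0 := rfl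
  show (0:ℝ) ≤ (a • x + b • y) 0
  rw [hxy]
  have hx' : (0:ℝ) ≤ x 0 := hx
  have hy' : (0:ℝ) ≤ y 0 := hy
  positivity

lemma zero_mem_halfPlane : (0 : EuclideanSpace ℝ (Fin 2)) ∈ halfPlane := by
  simp [halfPlane]

/-- Axis-aligned square box. -/
def eBox (x₀ : EuclideanSpace ℝ (Fin 2)) (a : ℝ) : Set (EuclideanSpace ℝ (Fin 2)) :=
  {y | ∀ i, y i ∈ Set.Icc (x₀ i) (x₀ i + a)}

lemma eBox_eq (x₀ : EuclideanSpace ℝ (Fin 2)) (a : ℝ) :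
    eBox x₀ a = (MeasurableEquiv.toLp 2 (Fin 2 → ℝ)).symm ⁻¹'
      (Set.univ.pi fun i => Set.Icc (x₀ i) (x₀ i + a)) := by
  ext y
  simp only [eBox, Set.mem_setOf_eq, Set.mem_preimage, Set.mem_pi, Set.mem_univ, true_implies]
  exact ⟨fun h i => h i, fun h i => h i⟩

lemma measurableSet_eBox (x₀ : EuclideanSpace ℝ (Fin 2)) (a : ℝ) :
    MeasurableSet (eBox x₀ a) := by
  rw [eBox_eq]
  exact (MeasurableSet.univ_pi fun i => measurableSet_Icc).preimage
    (MeasurableEquiv.toLp 2 (Fin 2 → ℝ)).symm.measurable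

lemma volume_eBox (x₀ : EuclideanSpace ℝ (Fin 2)) {a : ℝ} (ha : 0 ≤ a) :
    volume (eBox x₀ a) = ENNReal.ofReal (a ^ 2) := by
  rw [eBox_eq]
  rw [(EuclideanSpace.volume_preserving_symm_measurableEquiv_toLp (Fin 2)).measure_preimage
    ((MeasurableSet.univ_pi fun i => measurableSet_Icc).nullMeasurableSet)]
  rw [volume_pi_pi]
  simp only [Real.volume_Icc, add_sub_cancel_left]
  rw [Fin.prod_const 2, ← ENNReal.ofReal_pow ha]

lemma eBox_subset_halfPlane {x₀ : EuclideanSpace ℝ (Fin 2)} (hx₀ : x₀ ∈ halfPlane) (a : ℝ) :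
    eBox x₀ a ⊆ halfPlane := fun y hy => le_trans hx₀ (hy 0).1

lemma mem_eBox_self (x₀ : EuclideanSpace ℝ (Fin 2)) {a : ℝ} (ha : 0 ≤ a) :
    x₀ ∈ eBox x₀ a := fun i => ⟨le_refl _, by linarith⟩

lemma norm_sub_le_of_mem_eBox {x₀ y : EuclideanSpace ℝ (Fin 2)} {a : ℝ} (ha : 0 ≤ a)
    (hy : y ∈ eBox x₀ a) : ‖y - x₀‖ ≤ 2 * a := by
  have h : ∀ i, |y i - x₀ i| ≤ a := by
    intro i
    rcases hy i with ⟨h1, h2⟩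
    rw [abs_le]; constructor <;> linarith
  rw [EuclideanSpace.norm_eq]
  have hi : ∀ i : Fin 2, ‖(y - x₀) i‖ ^ 2 ≤ a ^ 2 := by
    intro i
    have he : (y - x₀) i = y i - x₀ i := rfl
    rw [he, Real.norm_eq_abs, sq_abs]
    have := h i
    nlinarith [abs_nonneg (y i - x₀ i), sq_abs (y i - x₀ i)]
  have hsum : (∑ i : Fin 2, ‖(y - x₀) i‖ ^ 2) ≤ (2*a)^2 := by
    rw [Fin.sum_univ_two]
    have h0 := hi 0
    have h1 := hi 1
    nlinarith
  calc Real.sqrt (∑ i : Fin 2, ‖(y - x₀) i‖ ^ 2) ≤ Real.sqrt ((2*a)^2) :=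
        Real.sqrt_le_sqrt hsum
    _ = 2 * a := Real.sqrt_sq (by linarith)

/-- Derivative vanishes at points of the half-plane where `f` vanishes on a neighborhood
within the half-plane. -/
lemma fderiv_eq_zero_of_zero_nhd {f : EuclideanSpace ℝ (Fin 2) → ℝ}
    (hf : ContDiff ℝ (⊤ : ℕ∞) f) {x : EuclideanSpace ℝ (Fin 2)} (hx : x ∈ halfPlane)
    {ε : ℝ} (hε : 0 < ε) (h0 : ∀ y ∈ halfPlane ∩ Metric.ball x ε, f y = 0) :
    fderiv ℝ f x = 0 := by
  set s := halfPlane ∩ Metric.ball x ε with hs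
  have hxs : x ∈ s := ⟨hx, Metric.mem_ball_self hε⟩
  have hconv : Convex ℝ s := convex_halfPlane.inter (convex_ball x ε)
  have hne : (interior s).Nonempty := by
    refine ⟨x + EuclideanSpace.single 0 (ε/2), ?_⟩
    rw [hs, interior_inter]
    constructor
    · have hU : IsOpen {y : EuclideanSpace ℝ (Fin 2) | 0 < y 0} := by
        have : {y : EuclideanSpace ℝ (Fin 2) | 0 < y 0} =
            (EuclideanSpace.proj (0 : Fin 2) : EuclideanSpace ℝ (Fin 2) →L[ℝ] ℝ) ⁻¹' Set.Ioi 0 := by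
          ext y; simp
        rw [this]
        exact isOpen_Ioi.preimage (EuclideanSpace.proj (0 : Fin 2)).continuous
      have hsub : {y : EuclideanSpace ℝ (Fin 2) | 0 < y 0} ⊆ halfPlane :=
        fun y hy => by
          have h' : (0:ℝ) < y 0 := hy
          show y ∈ {x : EuclideanSpace ℝ (Fin 2) | 0 ≤ x 0}
          exact le_of_lt h' 
      have hx0 : (0:ℝ) ≤ x 0 := hx
      have hmem : x + EuclideanSpace.single (0:Fin 2) (ε/2) ∈
          {y : EuclideanSpace ℝ (Fin 2) | 0 < y 0} := by
        simp only [Set.mem_setOf_eq, PiLp.add_apply, EuclideanSpace.single_apply, if_true, eq_self_iff_true]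
        linarith
      exact interior_maximal hsub hU hmem
    · rw [Metric.isOpen_ball.interior_eq, Metric.mem_ball, dist_eq_norm,
        add_sub_cancel_left, EuclideanSpace.norm_single, Real.norm_eq_abs,
        abs_of_pos (by linarith : (0:ℝ) < ε/2)]
      linarith
  have hud : UniqueDiffWithinAt ℝ s x := uniqueDiffWithinAt_convex hconv hne (subset_closure hxs)
  have h1 : HasFDerivWithinAt f (fderiv ℝ f x) s x :=
    ((hf.differentiable (by simp)) x).hasFDerivAt.hasFDerivWithinAt
  have h2 : HasFDerivWithinAt f (0 : EuclideanSpace ℝ (Fin 2) →L[ℝ] ℝ) s x := by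
    have hc : HasFDerivWithinAt (fun _ => (0:ℝ)) (0 : EuclideanSpace ℝ (Fin 2) →L[ℝ] ℝ) s x :=
      hasFDerivWithinAt_const 0 x s
    exact hc.congr (fun y hy => h0 y hy) (h0 x hxs)
  exact hud.eq h1 h2

/-- Interpolation inequality on the half-plane `[0,∞) × ℝ` (no boundary condition):
there is a constant `C > 0` such that `‖f‖_∞² ≤ C ‖f‖_{L²} ‖Df‖_∞`, all norms taken over
the half-plane, for every `f` which is the restriction of a smooth function on `ℝ²`
whose support intersected with the half-plane is compact. -/
theorem sobolev_interpolation_half_plane :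
    ∃ C : ℝ, 0 < C ∧ ∀ f : EuclideanSpace ℝ (Fin 2) → ℝ,
      ContDiff ℝ (⊤ : ℕ∞) f →
      IsCompact (closure {x ∈ halfPlane | f x ≠ 0}) →
      (⨆ x ∈ halfPlane, |f x|) ^ 2 ≤
        C * Real.sqrt (∫ x in halfPlane, (f x) ^ 2) * (⨆ x ∈ halfPlane, ‖fderiv ℝ f x‖) := by
  refine ⟨8, by norm_num, fun f hf hK => ?_⟩
  set K := closure {x ∈ halfPlane | f x ≠ 0} with hKdef
  have hKclosed : IsClosed K := isClosed_closure
  -- values of f vanish on halfPlane off K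
  have hfK : ∀ x ∈ halfPlane, x ∉ K → f x = 0 := by
    intro x hx hxK
    by_contra h
    exact hxK (subset_closure ⟨hx, h⟩)
  -- derivative vanishes on halfPlane off K
  have hdK : ∀ x ∈ halfPlane, x ∉ K → fderiv ℝ f x = 0 := by
    intro x hx hxK
    rcases Metric.isOpen_iff.1 hKclosed.isOpen_compl x hxK with ⟨ε, hε, hball⟩
    exact fderiv_eq_zero_of_zero_nhd hf hx hε
      (fun y hy => hfK y hy.1 (fun hyK => (hball hy.2) hyK))
  set M := ⨆ x ∈ halfPlane, |f x| with hMdef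
  set L := ⨆ x ∈ halfPlane, ‖fderiv ℝ f x‖ with hLdef
  set I := ∫ x in halfPlane, (f x) ^ 2 with hIdef
  -- bounds
  obtain ⟨B, hB⟩ := hK.exists_bound_of_continuousOn (hf.continuous.continuousOn (s := K))
  obtain ⟨D, hD⟩ := hK.exists_bound_of_continuousOn
    ((hf.continuous_fderiv (by norm_num)).continuousOn (s := K))
  have hbddM : BddAbove (Set.range fun x => ⨆ (_ : x ∈ halfPlane), |f x|) := by
    refine ⟨max B 0, ?_⟩
    rintro _ ⟨x, rfl⟩
    dsimp only
    by_cases hx : x ∈ halfPlane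
    · rw [ciSup_pos hx]
      by_cases hxK : x ∈ K
      · exact le_max_of_le_left (by simpa using hB x hxK)
      · rw [hfK x hx hxK]; simp
    · haveI : IsEmpty (x ∈ halfPlane) := isEmpty_Prop.2 hx
      rw [Real.iSup_of_isEmpty]
      exact le_max_right _ _
  have hbddL : BddAbove (Set.range fun x => ⨆ (_ : x ∈ halfPlane), ‖fderiv ℝ f x‖) := by
    refine ⟨max D 0, ?_⟩
    rintro _ ⟨x, rfl⟩
    dsimp only
    by_cases hx : x ∈ halfPlane
    · rw [ciSup_pos hx]
      by_cases hxK : x ∈ K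
      · exact le_max_of_le_left (by simpa using hD x hxK)
      · rw [hdK x hx hxK]; simp
    · haveI : IsEmpty (x ∈ halfPlane) := isEmpty_Prop.2 hx
      rw [Real.iSup_of_isEmpty]
      exact le_max_right _ _
  have hM_ge : ∀ x ∈ halfPlane, |f x| ≤ M := by
    intro x hx
    have h := le_ciSup hbddM x
    rwa [ciSup_pos hx] at h
  have hL_ge : ∀ x ∈ halfPlane, ‖fderiv ℝ f x‖ ≤ L := by
    intro x hx
    have h := le_ciSup hbddL x
    rwa [ciSup_pos hx] at h
  have hM0 : 0 ≤ M := le_trans (abs_nonneg _) (hM_ge 0 zero_mem_halfPlane)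
  have hL0 : 0 ≤ L := le_trans (norm_nonneg _) (hL_ge 0 zero_mem_halfPlane)
  -- integrability
  have hInt : IntegrableOn (fun x => f x ^ 2) halfPlane volume := by
    have h1 : IntegrableOn (fun x => f x ^ 2) K volume :=
      ((hf.continuous.pow 2).continuousOn).integrableOn_compact hK
    have h2 : IntegrableOn (fun x => f x ^ 2) (halfPlane \ K) volume := by
      apply (integrableOn_congr_fun (g := fun _ => (0:ℝ)) ?_ ?_).mpr (integrableOn_zero)
      · intro x hx
        show f x ^ 2 = (0:ℝ)
        rw [hfK x hx.1 hx.2]; norm_num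
      · exact measurableSet_halfPlane.diff hKclosed.measurableSet
    exact (h1.union h2).mono_set (fun x hx => by
      by_cases hxK : x ∈ K
      · exact Set.mem_union_left _ hxK
      · exact Set.mem_union_right _ ⟨hx, hxK⟩)
  have hI0 : 0 ≤ I :=
    setIntegral_nonneg measurableSet_halfPlane (fun x _ => sq_nonneg _)
  have hRHS0 : 0 ≤ 8 * Real.sqrt I * L := by positivity
  -- Key step
  have key : ∀ m : ℝ, 0 < m → (∃ x₀ ∈ halfPlane, m < |f x₀|) → m ^ 2 ≤ 8 * Real.sqrt I * L := by
    intro m hm ⟨x₀, hx₀, hfx₀⟩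
    have hLpos : 0 < L := by
      rcases lt_or_eq_of_le hL0 with h | h
      · exact h
      -- L = 0 : contradiction
      exfalso
      obtain ⟨R, hR⟩ := hK.isBounded.subset_closedBall 0
      set y : EuclideanSpace ℝ (Fin 2) := EuclideanSpace.single 0 (max R 0 + 1) with hy
      have hyhp : y ∈ halfPlane := by
        show (0:ℝ) ≤ y 0
        rw [hy, EuclideanSpace.single_apply]
        simp
        positivity
      have hynK : y ∉ K := by
        intro hyK
        have := hR hyK
        rw [Metric.mem_closedBall, dist_zero_right, hy, EuclideanSpace.norm_single,
          Real.norm_eq_abs, abs_of_pos (by positivity)] at this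
        have : R ≤ max R 0 := le_max_left _ _
        linarith [hR hyK, le_max_left R 0]
      have hfy : f y = 0 := hfK y hyhp hynK
      have hdiff : ∀ x ∈ halfPlane, DifferentiableAt ℝ f x :=
        fun x _ => (hf.differentiable (by simp)) x
      have hder : ∀ x ∈ halfPlane, ‖fderiv ℝ f x‖ ≤ (0:ℝ) := by
        intro x hx; rw [h]; exact hL_ge x hx
      have := convex_halfPlane.norm_image_sub_le_of_norm_fderiv_le hdiff hder hyhp hx₀
      rw [hfy, sub_zero, zero_mul] at this
      have : |f x₀| ≤ 0 := by simpa using this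
      linarith
    set a : ℝ := m / (4 * L) with ha
    have hapos : 0 < a := by positivity
    set Q := eBox x₀ a with hQ
    have hQsub : Q ⊆ halfPlane := eBox_subset_halfPlane hx₀ a
    -- lower bound for |f| on Q
    have hlow : ∀ y ∈ Q, (m / 2) ^ 2 ≤ f y ^ 2 := by
      intro y hyQ
      have hyhp : y ∈ halfPlane := hQsub hyQ
      have hdiff : ∀ x ∈ halfPlane, DifferentiableAt ℝ f x :=
        fun x _ => (hf.differentiable (by simp)) x
      have hdist := convex_halfPlane.norm_image_sub_le_of_norm_fderiv_le hdiff hL_ge hyhp hx₀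
      have hnorm : ‖x₀ - y‖ ≤ 2 * a := by
        rw [norm_sub_rev]
        exact norm_sub_le_of_mem_eBox hapos.le hyQ
      have h2 : ‖f x₀ - f y‖ ≤ L * (2 * a) :=
        le_trans hdist (by nlinarith [norm_nonneg (x₀ - y)])
      have h3 : L * (2 * a) = m / 2 := by
        rw [ha]; field_simp; ring
      have h4 : |f x₀| - |f y| ≤ m / 2 := by
        calc |f x₀| - |f y| ≤ |f x₀ - f y| := abs_sub_abs_le_abs_sub _ _
          _ = ‖f x₀ - f y‖ := (Real.norm_eq_abs _).symm
          _ ≤ m / 2 := by rw [← h3]; exact h2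
      have h5 : m / 2 ≤ |f y| := by linarith
      calc (m/2)^2 ≤ |f y| ^ 2 := pow_le_pow_left₀ (by linarith) h5 2
        _ = f y ^ 2 := sq_abs _
    -- integral lower bound
    have hIntQ : IntegrableOn (fun x => f x ^ 2) Q volume :=
      hInt.mono_set hQsub
    have hvolQ : volume Q = ENNReal.ofReal (a ^ 2) := volume_eBox x₀ hapos.le
    have hvolQtop : volume Q ≠ ⊤ := by rw [hvolQ]; exact ENNReal.ofReal_ne_top
    have hstep1 : (m/2)^2 * a^2 ≤ ∫ x in Q, f x ^ 2 := by
      have := setIntegral_ge_of_const_le_real (measurableSet_eBox x₀ a) hvolQtop hlow hIntQ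
      rwa [measureReal_def, hvolQ, ENNReal.toReal_ofReal (by positivity)] at this
    have hstep2 : (∫ x in Q, f x ^ 2) ≤ I := by
      apply setIntegral_mono_set hInt
      · exact Filter.Eventually.of_forall (fun x => sq_nonneg _)
      · exact Filter.Eventually.of_forall hQsub
    have hstep3 : m^4 / (64 * L^2) ≤ I := by
      have : (m/2)^2 * a^2 = m^4 / (64 * L^2) := by
        rw [ha]; field_simp; ring
      linarith [hstep1, hstep2, this ▸ hstep1]
    have hstep4 : m^2 / (8*L) ≤ Real.sqrt I := by
      rw [show m^4 / (64 * L^2) = (m^2/(8*L))^2 by field_simp; ring] at hstep3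
      calc m^2/(8*L) = Real.sqrt ((m^2/(8*L))^2) := (Real.sqrt_sq (by positivity)).symm
        _ ≤ Real.sqrt I := Real.sqrt_le_sqrt hstep3
    calc m^2 = (m^2/(8*L)) * (8 * L) := by field_simp
      _ ≤ Real.sqrt I * (8 * L) := by
          apply mul_le_mul_of_nonneg_right hstep4 (by positivity)
      _ = 8 * Real.sqrt I * L := by ring
  -- conclude
  have : M ^ 2 ≤ 8 * Real.sqrt I * L := by
    apply le_of_forall_lt_imp_le_of_dense
    intro c hc
    rcases le_or_gt c 0 with hc0 | hc0
    · linarith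
    · have hcM : Real.sqrt c < M := by
        have : Real.sqrt c < Real.sqrt (M^2) := Real.sqrt_lt_sqrt hc0.le hc
        rwa [Real.sqrt_sq hM0] at this
      obtain ⟨m, hm1, hm2⟩ := exists_between hcM
      have hmpos : 0 < m := lt_of_le_of_lt (Real.sqrt_nonneg c) hm1
      have hex : ∃ x₀ ∈ halfPlane, m < |f x₀| := by
        rw [hMdef] at hm2
        obtain ⟨x₀, hx₀⟩ := exists_lt_of_lt_ciSup hm2
        by_cases hx : x₀ ∈ halfPlane
        · rw [ciSup_pos hx] at hx₀
          exact ⟨x₀, hx, hx₀⟩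
        · haveI : IsEmpty (x₀ ∈ halfPlane) := isEmpty_Prop.2 hx
          rw [Real.iSup_of_isEmpty] at hx₀
          linarith
      have hkey := key m hmpos hex
      have : c < m ^ 2 := by
        calc c = Real.sqrt c ^ 2 := (Real.sq_sqrt hc0.le).symm
          _ < m ^ 2 := by
              apply pow_lt_pow_left₀ hm1 (Real.sqrt_nonneg c) (by norm_num)
      linarith
  exact this
end
end

section
/- Let H : ℝ × ℝ² → ℝ be C^∞ with H(t+1, ·) = H(t, ·) for all t, let X_{H^t} = i∇H^t be the associated Hamiltonian vector field, assumed tangent to ∂D for every t, and let φ_H^t : D → D denote the generated flow with φ_H^0 = id. Let B ≥ 0 be a constant with |X_{H^t}(ξ) − X_{H^t}(η)| ≤ B|ξ − η| for all t ∈ ℝ and ξ, η ∈ D. Fix an integer n ≥ 1 and A ≥ 0, and let p ∈ D. Suppose there exists a C¹ map z : [0,∞) × ℝ/nℤ → D satisfying the Floer equation ∂_s z + i(∂_t z − X_{H^t}(z)) = 0, with sup_{(s,t)} |∂_s z(s,t)| ≤ A, and with z(s₀, 0) = p for some s₀ ≥ 0. Then |φ_H^n(p) − p| ≤ A·n·e^{Bn}.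 -/
noncomputable section

open MeasureTheory Filter Real Set

/-- The closed unit disk `D ⊆ ℂ ≅ ℝ²`. -/
def unitDisk : Set ℂ := Metric.closedBall 0 1

/-- The Hamiltonian vector field `X_{H^t} = i∇H^t` on `ℂ ≅ ℝ²` (characterized by
`ω₀(X_{H^t}, ·) = −dH^t`). -/
def hamVF (H : ℝ → ℂ → ℝ) (t : ℝ) (ξ : ℂ) : ℂ :=
  Complex.I * ⟨(fderiv ℝ (H t) ξ) 1, (fderiv ℝ (H t) ξ) Complex.I⟩

/-- If `z : [0,∞) × ℝ/nℤ → D` is a `C¹` solution of the Floer equation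
`∂ₛz + i(∂ₜz − X_{H^t}(z)) = 0` with `sup |∂ₛz| ≤ A` passing through `p` at time `t = 0`,
and `X_{H^t}` is `B`-Lipschitz on `D`, then `‖φ_H^n(p) − p‖ ≤ A n e^{Bn}`. -/
theorem floer_trajectory_estimate
    (H : ℝ → ℂ → ℝ)
    (Hsmooth : ContDiff ℝ (⊤ : ℕ∞) (Function.uncurry H))
    (Hper : ∀ (t : ℝ) (ξ : ℂ), H (t + 1) ξ = H t ξ)
    (Htangent : ∀ (t : ℝ) (ξ : ℂ), ‖ξ‖ = 1 → (hamVF H t ξ * (starRingEnd ℂ) ξ).re = 0)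
    (Φ : ℝ → ℂ → ℂ)
    (hΦ0 : ∀ ξ, Φ 0 ξ = ξ)
    (hΦode : ∀ ξ ∈ unitDisk, ∀ t : ℝ, HasDerivAt (fun τ => Φ τ ξ) (hamVF H t (Φ t ξ)) t)
    (hΦmaps : ∀ t : ℝ, Set.MapsTo (Φ t) unitDisk unitDisk)
    (B : ℝ) (hB : 0 ≤ B)
    (hlip : ∀ t : ℝ, ∀ ξ ∈ unitDisk, ∀ η ∈ unitDisk,
      ‖hamVF H t ξ - hamVF H t η‖ ≤ B * ‖ξ - η‖)
    (n : ℕ) (hn : 1 ≤ n) (A : ℝ) (hA : 0 ≤ A)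
    (p : ℂ) (hp : p ∈ unitDisk)
    (z : ℝ × ℝ → ℂ)
    (hzC1 : ContDiff ℝ 1 z)
    (hzper : ∀ s t : ℝ, z (s, t + n) = z (s, t))
    (hzD : ∀ s t : ℝ, 0 ≤ s → z (s, t) ∈ unitDisk)
    (hzFloer : ∀ s t : ℝ, 0 ≤ s →
      fderiv ℝ z (s, t) (1, 0)
        + Complex.I * (fderiv ℝ z (s, t) (0, 1) - hamVF H t (z (s, t))) = 0)
    (hzbound : ∀ s t : ℝ, 0 ≤ s → ‖fderiv ℝ z (s, t) (1, 0)‖ ≤ A)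
    (s₀ : ℝ) (hs₀ : 0 ≤ s₀) (hzp : z (s₀, 0) = p) :
    ‖Φ (n : ℝ) p - p‖ ≤ A * n * Real.exp (B * n) := by

  -- the two trajectories
  set f : ℝ → ℂ := fun t => z (s₀, t) with hf_def
  set g : ℝ → ℂ := fun t => Φ t p with hg_def
  have hK : ((B.toNNReal : NNReal) : ℝ) = B := Real.coe_toNNReal B hB
  have hvlip : ∀ t : ℝ, LipschitzOnWith B.toNNReal (hamVF H t) unitDisk := by
    intro t
    rw [lipschitzOnWith_iff_norm_sub_le]
    intro ξ hξ η hη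
    rw [hK]
    exact hlip t ξ hξ η hη
  -- derivative of f
  have hfderiv : ∀ t : ℝ, HasDerivAt f (fderiv ℝ z (s₀, t) (0, 1)) t := by
    intro t
    have hc : HasDerivAt (fun τ : ℝ => ((s₀, τ) : ℝ × ℝ)) ((0 : ℝ), (1 : ℝ)) t :=
      (hasDerivAt_const t s₀).prodMk (hasDerivAt_id t)
    exact ((hzC1.differentiable one_ne_zero (s₀, t)).hasFDerivAt).comp_hasDerivAt t hc
  -- f is an approximate solution with error ≤ A
  have hfbound : ∀ t : ℝ, dist (fderiv ℝ z (s₀, t) (0, 1)) (hamVF H t (f t)) ≤ A := by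
    intro t
    have hF := hzFloer s₀ t hs₀
    have h2 : fderiv ℝ z (s₀, t) (0, 1) - hamVF H t (z (s₀, t))
        = Complex.I * fderiv ℝ z (s₀, t) (1, 0) := by
      linear_combination (-Complex.I) * hF
        + (fderiv ℝ z (s₀, t) (0, 1) - hamVF H t (z (s₀, t))) * Complex.I_mul_I
    rw [dist_eq_norm]
    show ‖fderiv ℝ z (s₀, t) (0, 1) - hamVF H t (z (s₀, t))‖ ≤ A
    rw [h2, norm_mul, Complex.norm_I, one_mul]
    exact hzbound s₀ t hs₀
  have h0n : (0 : ℝ) ≤ (n : ℝ) := Nat.cast_nonneg n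
  -- main Gronwall estimate
  have main := dist_le_of_approx_trajectories_ODE_of_mem (v := fun t => hamVF H t)
    (s := fun _ => unitDisk) (K := B.toNNReal)
    (f := f) (g := g) (f' := fun t => fderiv ℝ z (s₀, t) (0, 1))
    (g' := fun t => hamVF H t (g t)) (a := 0) (b := (n : ℝ)) (εf := A) (εg := 0) (δ := 0)
    (fun t _ => hvlip t)
    (Continuous.continuousOn (hzC1.continuous.comp (continuous_const.prodMk continuous_id)))
    (fun t _ => (hfderiv t).hasDerivWithinAt)
    (fun t _ => hfbound t)
    (fun t _ => hzD s₀ t hs₀)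
    (fun t _ => (hΦode p hp t).differentiableAt.continuousAt.continuousWithinAt)
    (fun t _ => (hΦode p hp t).hasDerivWithinAt)
    (fun t _ => by simp)
    (fun t _ => hΦmaps t hp)
    (by simp [hf_def, hg_def, hzp, hΦ0])
  have hmem : (n : ℝ) ∈ Icc (0 : ℝ) (n : ℝ) := ⟨h0n, le_rfl⟩
  have hfin : f (n : ℝ) = p := by
    have := hzper s₀ 0
    simpa [hzp] using this
  have hdist := main (n : ℝ) hmem
  rw [hfin] at hdist
  have hdist' : ‖Φ (n : ℝ) p - p‖ ≤ gronwallBound 0 (B.toNNReal : ℝ) (A + 0) ((n : ℝ) - 0) := by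
    rw [← dist_eq_norm, dist_comm]
    exact hdist
  refine hdist'.trans ?_
  rw [hK, add_zero, sub_zero]
  -- estimate the Gronwall bound
  have hexp1 : (1 : ℝ) ≤ Real.exp (B * n) := Real.one_le_exp (mul_nonneg hB h0n)
  by_cases hB0 : B = 0
  · subst hB0
    rw [gronwallBound_K0]
    simp only [zero_add]
    nlinarith [mul_nonneg hA h0n, hexp1]
  · have hBpos : 0 < B := lt_of_le_of_ne hB (Ne.symm hB0)
    rw [gronwallBound_of_K_ne_0 hB0]
    simp only [zero_mul, zero_add]
    have key : Real.exp (B * n) - 1 ≤ B * n * Real.exp (B * n) := by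
      have h1 : -(B * n) + 1 ≤ Real.exp (-(B * n)) := Real.add_one_le_exp _
      rw [Real.exp_neg] at h1
      have hp2 : (0 : ℝ) < Real.exp (B * n) := Real.exp_pos _
      have h3 : (1 - B * n) * Real.exp (B * n) ≤ (Real.exp (B * n))⁻¹ * Real.exp (B * n) :=
        mul_le_mul_of_nonneg_right (by linarith) hp2.le
      rw [inv_mul_cancel₀ hp2.ne'] at h3
      nlinarith
    have h4 : A / B * (Real.exp (B * n) - 1) ≤ A / B * (B * n * Real.exp (B * n)) :=
      mul_le_mul_of_nonneg_left key (div_nonneg hA hB)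
    calc A / B * (Real.exp (B * n) - 1) ≤ A / B * (B * n * Real.exp (B * n)) := h4
    _ = A * n * Real.exp (B * n) := by field_simp
end
end
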